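/- Let {(x^i, y_i)}_{i=1}^n ⊂ ℝ^d_+ × [K] with at least one x^i nonzero being unnecessary, ε > 0, and let Φ be the objective of the one-hidden-layer model with α_i ≥ 1 for all i ∈ [n₁]. Then the gradient ∇Φ(w,u) has strictly positive entries for every (w,u) ∈ S_+; explicitly, ∂Φ/∂w_{a,b} = (1/n) Σ_{i=1}^n ( δ_{y_i a} − e^{f_a(x^i)}/Σ_j e^{f_j(x^i)} + 1 ) (Σ_m u_{bm} x^i_m)^{α_b} + ε > 0 and ∂Φ/∂u_{ab} = (1/n) Σ_{i=1}^n Σ_{r=1}^K ( δ_{y_i r} − e^{f_r(x^i)}/Σ_j e^{f_j(x^i)} + 1 ) w_{r,a} α_a (Σ_m u_{am} x^i_m)^{α_a −1} x^i_b + ε > 0. -/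

import Mathlib

noncomputable section

open Real Filter Topology

/-- Parameter space of a one-hidden-layer network: pairs `(w, u)`. -/
abbrev PV (K n1 d : ℕ) : Type :=
  (Fin K → Fin n1 → ℝ) × (Fin n1 → Fin d → ℝ)

/-- Entrywise `p`-norm of a vector. -/
def pnorm {ι : Type} [Fintype ι] (p : ℝ) (x : ι → ℝ) : ℝ :=
  (∑ i, |x i| ^ p) ^ (1 / p)

/-- Entrywise `p`-norm of a matrix. -/
def pnormM {ι κ : Type} [Fintype ι] [Fintype κ] (p : ℝ) (x : ι → κ → ℝ) : ℝ :=
  (∑ i, ∑ j, |x i j| ^ p) ^ (1 / p)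

/-- Hölder conjugate `p' = p/(p-1)`. -/
def hconj (p : ℝ) : ℝ := p / (p - 1)

/-- `ψ_p(x) = sign(x) |x|^{p-1}`. -/
def psi (p x : ℝ) : ℝ := Real.sign x * |x| ^ (p - 1)

/-- The constraint set `S₊`. -/
def Splus (K n1 d : ℕ) (pw pu ρw ρu : ℝ) : Set (PV K n1 d) :=
  {z | (∀ i j, 0 ≤ z.1 i j) ∧ (∀ a b, 0 ≤ z.2 a b) ∧
    (∀ i, pnorm pw (z.1 i) = ρw) ∧ pnormM pu z.2 = ρu}

/-- The constraint set `S₊₊` (strictly positive entries). -/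
def Spp (K n1 d : ℕ) (pw pu ρw ρu : ℝ) : Set (PV K n1 d) :=
  {z | (∀ i j, 0 < z.1 i j) ∧ (∀ a b, 0 < z.2 a b) ∧
    (∀ i, pnorm pw (z.1 i) = ρw) ∧ pnormM pu z.2 = ρu}

/-- The set `B₊₊` (strictly positive entries, norms at most `ρ`). -/
def Bpp (K n1 d : ℕ) (pw pu ρw ρu : ℝ) : Set (PV K n1 d) :=
  {z | (∀ i j, 0 < z.1 i j) ∧ (∀ a b, 0 < z.2 a b) ∧
    (∀ i, pnorm pw (z.1 i) ≤ ρw) ∧ pnormM pu z.2 ≤ ρu}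

/-- Coordinate direction for the entry `w_{a,b}`. -/
def eW {K n1 d : ℕ} (a : Fin K) (b : Fin n1) : PV K n1 d :=
  ((fun i j => if i = a ∧ j = b then 1 else 0), 0)

/-- Coordinate direction for the entry `u_{a,b}`. -/
def eU {K n1 d : ℕ} (a : Fin n1) (b : Fin d) : PV K n1 d :=
  (0, fun i j => if i = a ∧ j = b then 1 else 0)

/-- Partial derivative `∂Φ/∂w_{a,b}`. -/
def gradW {K n1 d : ℕ} (Φ : PV K n1 d → ℝ) (z : PV K n1 d) (a : Fin K) (b : Fin n1) : ℝ :=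
  fderiv ℝ Φ z (eW a b)

/-- Partial derivative `∂Φ/∂u_{a,b}`. -/
def gradU {K n1 d : ℕ} (Φ : PV K n1 d → ℝ) (z : PV K n1 d) (a : Fin n1) (b : Fin d) : ℝ :=
  fderiv ℝ Φ z (eU a b)

/-- The power-iteration map `G^Φ`. -/
def GPhi {K n1 d : ℕ} (pw pu ρw ρu : ℝ) (Φ : PV K n1 d → ℝ) (z : PV K n1 d) : PV K n1 d :=
  ((fun i j => ρw * psi (hconj pw) (gradW Φ z i j) /
      pnorm pw (fun j' => psi (hconj pw) (gradW Φ z i j'))),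
    fun a b => ρu * psi (hconj pu) (gradU Φ z a b) /
      pnormM pu (fun a' b' => psi (hconj pu) (gradU Φ z a' b')))

/-- One-hidden-layer network `f_r(w,u)(x)`. -/
def net {K n1 d : ℕ} (α : Fin n1 → ℝ) (w : Fin K → Fin n1 → ℝ) (u : Fin n1 → Fin d → ℝ)
    (x : Fin d → ℝ) (r : Fin K) : ℝ :=
  ∑ l, w r l * (∑ m, u l m * x m) ^ α l

/-- Cross-entropy loss. -/
def loss {K : ℕ} (y : Fin K) (g : Fin K → ℝ) : ℝ :=
  -g y + Real.log (∑ j, Real.exp (g j))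

/-- The objective `Φ`. -/
def Phi {K n1 d n : ℕ} (α : Fin n1 → ℝ) (x : Fin n → Fin d → ℝ) (y : Fin n → Fin K)
    (ε : ℝ) (z : PV K n1 d) : ℝ :=
  (1 / (n : ℝ)) * ∑ i, (-loss (y i) (net α z.1 z.2 (x i)) + ∑ r, net α z.1 z.2 (x i) r)
    + ε * ((∑ r, ∑ l, z.1 r l) + ∑ l, ∑ m, z.2 l m)

/-- Spectral radius of a real square matrix: maximum modulus of its (complex) eigenvalues. -/
def specRad {m : ℕ} (A : Matrix (Fin m) (Fin m) ℝ) : ℝ :=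
  sSup {r : ℝ | ∃ μ : ℂ, μ ∈ spectrum ℂ (A.map Complex.ofReal) ∧ r = ‖μ‖}

/-- Maximum of `g` over `Fin n`, `n > 0`. -/
def finMax {n : ℕ} (hn : 0 < n) (g : Fin n → ℝ) : ℝ :=
  Finset.univ.sup' (Finset.univ_nonempty_iff.mpr (Fin.pos_iff_nonempty.mp hn)) g

/-- Weighted Thompson metric `μ` with weights `γ`. -/
def thomW {K n1 d : ℕ} (γ : Fin (K + 1) → ℝ) (z z' : PV K n1 d) : ℝ :=
  (∑ i : Fin K, γ i.castSucc *
      ‖(fun j : Fin n1 => Real.log (z.1 i j) - Real.log (z'.1 i j))‖)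
    + γ (Fin.last K) *
      ‖(fun (a : Fin n1) (b : Fin d) => Real.log (z.2 a b) - Real.log (z'.2 a b))‖

/-- The function `Ψ^α_{p,q}` from the paper. -/
def PsiF {r : ℕ} (α : Fin r → ℝ) (p q : ℝ) (δ : Fin r → ℝ) (t : ℝ) : ℝ :=
  let J : Finset (Fin r) := Finset.univ.filter fun l => α l * p ≤ q
  let Jc : Finset (Fin r) := Finset.univ.filter fun l => q < α l * p
  let ab : ℝ := if h : J.Nonempty then J.inf' h α else 0
  ((∑ l ∈ J, (δ l * t ^ α l) ^ (p * q / (q - ab * p))) ^ (1 - ab * p / q)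
    + if h : Jc.Nonempty then Jc.sup' h fun j => (δ j * t ^ α j) ^ p else 0) ^ (1 / p)

end

section AuxProofs
open Real Finset

lemma netW_hasDeriv {K n1 d : ℕ} (α : Fin n1 → ℝ) (xi : Fin d → ℝ) (z : PV K n1 d)
    (a : Fin K) (b : Fin n1) (r : Fin K) :
    HasDerivAt (fun t : ℝ => net α (z + t • eW a b).1 (z + t • eW a b).2 xi r)
      (if r = a then (∑ m, z.2 b m * xi m) ^ α b else 0) 0 := by
  have hEq : (fun t : ℝ => net α (z + t • eW a b).1 (z + t • eW a b).2 xi r)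
      = fun t => net α z.1 z.2 xi r
        + t * (if r = a then (∑ m, z.2 b m * xi m) ^ α b else 0) := by
    funext t
    simp only [net, eW, Prod.fst_add, Prod.snd_add, Prod.smul_fst, Prod.smul_snd,
      Pi.add_apply, Pi.smul_apply, smul_eq_mul, smul_zero, Pi.zero_apply, mul_zero, add_zero]
    by_cases hra : r = a
    · subst hra
      simp only [true_and]
      have hterm : ∀ l, (z.1 r l + t * (if l = b then (1:ℝ) else 0)) * (∑ m, z.2 l m * xi m) ^ α l
          = z.1 r l * (∑ m, z.2 l m * xi m) ^ α l
            + (if l = b then t * (∑ m, z.2 b m * xi m) ^ α b else 0) := by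
        intro l
        by_cases hl : l = b <;> simp [hl] <;> ring
      rw [Finset.sum_congr rfl fun l _ => hterm l, Finset.sum_add_distrib,
        Finset.sum_ite_eq' Finset.univ b]
      simp
    · simp [hra]
  rw [hEq]
  simpa using ((hasDerivAt_id (0:ℝ)).mul_const
    (if r = a then (∑ m, z.2 b m * xi m) ^ α b else 0)).const_add (net α z.1 z.2 xi r)

lemma netU_hasDeriv {K n1 d : ℕ} (α : Fin n1 → ℝ) (hα : ∀ l, 1 ≤ α l) (xi : Fin d → ℝ)
    (z : PV K n1 d) (a : Fin n1) (b : Fin d) (r : Fin K) :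
    HasDerivAt (fun t : ℝ => net α (z + t • eU a b).1 (z + t • eU a b).2 xi r)
      (z.1 r a * (α a * (∑ m, z.2 a m * xi m) ^ (α a - 1) * xi b)) 0 := by
  have hEq : (fun t : ℝ => net α (z + t • eU a b).1 (z + t • eU a b).2 xi r)
      = fun t => ∑ l, z.1 r l *
          ((∑ m, z.2 l m * xi m) + t * (if l = a then xi b else 0)) ^ α l := by
    funext t
    simp only [net, eU, Prod.fst_add, Prod.snd_add, Prod.smul_fst, Prod.smul_snd,
      Pi.add_apply, Pi.smul_apply, smul_eq_mul, smul_zero, Pi.zero_apply, mul_zero, add_zero]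
    refine Finset.sum_congr rfl fun l _ => ?_
    congr 1
    by_cases hl : l = a
    · subst hl
      simp only [true_and]
      have hterm : ∀ m, (z.2 l m + t * (if m = b then (1:ℝ) else 0)) * xi m
          = z.2 l m * xi m + (if m = b then t * xi b else 0) := by
        intro m
        by_cases hm : m = b <;> simp [hm] <;> ring
      rw [Finset.sum_congr rfl fun m _ => hterm m, Finset.sum_add_distrib,
        Finset.sum_ite_eq' Finset.univ b]
      simp
    · simp [hl]
  rw [hEq]
  have h1 : ∀ l, HasDerivAt (fun t : ℝ => z.1 r l *
        ((∑ m, z.2 l m * xi m) + t * (if l = a then xi b else 0)) ^ α l)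
      (z.1 r l * ((if l = a then xi b else 0) * α l * (∑ m, z.2 l m * xi m) ^ (α l - 1))) 0 := by
    intro l
    have hin : HasDerivAt (fun t : ℝ => (∑ m, z.2 l m * xi m) + t * (if l = a then xi b else 0))
        (if l = a then xi b else 0) 0 := by
      simpa using ((hasDerivAt_id (0:ℝ)).mul_const (if l = a then xi b else 0)).const_add
        (∑ m, z.2 l m * xi m)
    have := (hin.rpow_const (Or.inr (hα l))).const_mul (z.1 r l)
    simpa using this
  have hsum := HasDerivAt.fun_sum (fun l (_ : l ∈ Finset.univ) => h1 l)
  refine hsum.congr_deriv (Eq.symm ?_)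
  rw [Finset.sum_eq_single a]
  · rw [if_pos rfl]; ring
  · intro l _ hl; simp [hl]
  · simp

lemma linW_hasDeriv {K n1 d : ℕ} (z : PV K n1 d) (a : Fin K) (b : Fin n1) :
    HasDerivAt (fun t : ℝ => (∑ r, ∑ l, (z + t • eW a b).1 r l)
      + ∑ l, ∑ m, (z + t • eW a b).2 l m) 1 0 := by
  have hEq : (fun t : ℝ => (∑ r, ∑ l, (z + t • eW a b).1 r l)
      + ∑ l, ∑ m, (z + t • eW a b).2 l m)
      = fun t => (((∑ r, ∑ l, z.1 r l) + ∑ l, ∑ m, z.2 l m) + t) := by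
    funext t
    simp only [eW, Prod.fst_add, Prod.snd_add, Prod.smul_fst, Prod.smul_snd,
      Pi.add_apply, Pi.smul_apply, smul_eq_mul, smul_zero, Pi.zero_apply, add_zero,
      Finset.sum_add_distrib]
    have h1 : ∀ r : Fin K, (∑ l, t * (if r = a ∧ l = b then (1:ℝ) else 0))
        = if r = a then t else 0 := by
      intro r
      by_cases hr : r = a <;> simp [hr]
    rw [Finset.sum_congr rfl fun r _ => h1 r, Finset.sum_ite_eq' Finset.univ a]
    simp
    ring
  rw [hEq]
  simpa using (hasDerivAt_id (0:ℝ)).const_add ((∑ r, ∑ l, z.1 r l) + ∑ l, ∑ m, z.2 l m)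

lemma linU_hasDeriv {K n1 d : ℕ} (z : PV K n1 d) (a : Fin n1) (b : Fin d) :
    HasDerivAt (fun t : ℝ => (∑ r, ∑ l, (z + t • eU a b).1 r l)
      + ∑ l, ∑ m, (z + t • eU a b).2 l m) 1 0 := by
  have hEq : (fun t : ℝ => (∑ r, ∑ l, (z + t • eU a b).1 r l)
      + ∑ l, ∑ m, (z + t • eU a b).2 l m)
      = fun t => (((∑ r, ∑ l, z.1 r l) + ∑ l, ∑ m, z.2 l m) + t) := by
    funext t
    simp only [eU, Prod.fst_add, Prod.snd_add, Prod.smul_fst, Prod.smul_snd,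
      Pi.add_apply, Pi.smul_apply, smul_eq_mul, smul_zero, Pi.zero_apply, add_zero,
      Finset.sum_add_distrib]
    have h1 : ∀ l : Fin n1, (∑ m, t * (if l = a ∧ m = b then (1:ℝ) else 0))
        = if l = a then t else 0 := by
      intro l
      by_cases hl : l = a <;> simp [hl]
    rw [Finset.sum_congr rfl fun l _ => h1 l, Finset.sum_ite_eq' Finset.univ a]
    simp
    ring
  rw [hEq]
  simpa using (hasDerivAt_id (0:ℝ)).const_add ((∑ r, ∑ l, z.1 r l) + ∑ l, ∑ m, z.2 l m)

end AuxProofs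
section Key
open Real Finset

lemma net_diffAt {K n1 d : ℕ} (α : Fin n1 → ℝ) (hα : ∀ l, 1 ≤ α l) (xi : Fin d → ℝ)
    (z : PV K n1 d) (r : Fin K) :
    DifferentiableAt ℝ (fun p : PV K n1 d => net α p.1 p.2 xi r) z := by
  unfold net
  apply DifferentiableAt.fun_sum
  intro l _
  have h1 : DifferentiableAt ℝ (fun p : PV K n1 d => p.1 r l) z := by fun_prop
  have h2 : DifferentiableAt ℝ (fun p : PV K n1 d => ∑ m, p.2 l m * xi m) z := by fun_prop
  exact h1.mul (h2.rpow_const (Or.inr (hα l)))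

lemma phi_diffAt {K n1 d n : ℕ} (α : Fin n1 → ℝ) (hα : ∀ l, 1 ≤ α l)
    (x : Fin n → Fin d → ℝ) (y : Fin n → Fin K) (ε : ℝ) (z : PV K n1 d) :
    DifferentiableAt ℝ (Phi α x y ε) z := by
  unfold Phi loss
  apply DifferentiableAt.add
  · apply DifferentiableAt.const_mul
    apply DifferentiableAt.fun_sum
    intro i _
    apply DifferentiableAt.add
    · apply DifferentiableAt.neg
      apply DifferentiableAt.add
      · exact (net_diffAt α hα (x i) z (y i)).neg
      · refine DifferentiableAt.log ?_ ?_
        · exact DifferentiableAt.fun_sum fun j _ => (net_diffAt α hα (x i) z j).exp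
        · have : Nonempty (Fin K) := ⟨y i⟩
          exact ne_of_gt (Finset.sum_pos (fun j _ => Real.exp_pos _) Finset.univ_nonempty)
    · exact DifferentiableAt.fun_sum fun r _ => net_diffAt α hα (x i) z r
  · apply DifferentiableAt.const_mul
    fun_prop

lemma key {K n1 d n : ℕ} (α : Fin n1 → ℝ) (hα : ∀ l, 1 ≤ α l)
    (x : Fin n → Fin d → ℝ) (y : Fin n → Fin K) (ε : ℝ)
    (z v : PV K n1 d) (D : Fin n → Fin K → ℝ) (c : ℝ)
    (hnet : ∀ i r, HasDerivAt (fun t : ℝ => net α (z + t • v).1 (z + t • v).2 (x i) r) (D i r) 0)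
    (hlin : HasDerivAt (fun t : ℝ =>
        (∑ r, ∑ l, (z + t • v).1 r l) + ∑ l, ∑ m, (z + t • v).2 l m) c 0) :
    fderiv ℝ (Phi α x y ε) z v =
      (1 / (n : ℝ)) * ∑ i, (∑ r, ((if y i = r then 1 else 0) -
          Real.exp (net α z.1 z.2 (x i) r) / (∑ j, Real.exp (net α z.1 z.2 (x i) j)) + 1)
          * D i r)
        + ε * c := by
  set g : Fin n → Fin K → ℝ := fun i r => net α z.1 z.2 (x i) r with hg
  have h0 : z + (0:ℝ) • v = z := by simp
  -- derivative of the exp-sum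
  have hE : ∀ i, HasDerivAt
      (fun t : ℝ => ∑ j, Real.exp (net α (z + t • v).1 (z + t • v).2 (x i) j))
      (∑ j, Real.exp (g i j) * D i j) 0 := by
    intro i
    refine HasDerivAt.fun_sum fun j _ => ?_
    have := (hnet i j).exp
    simpa [h0, hg] using this
  have hEpos : ∀ i, 0 < ∑ j, Real.exp (g i j) := by
    intro i
    have : Nonempty (Fin K) := ⟨y i⟩
    exact Finset.sum_pos (fun j _ => Real.exp_pos _) Finset.univ_nonempty
  have hloss : ∀ i, HasDerivAt
      (fun t : ℝ => loss (y i) (net α (z + t • v).1 (z + t • v).2 (x i)))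
      (-(D i (y i)) + (∑ j, Real.exp (g i j) * D i j) / (∑ j, Real.exp (g i j))) 0 := by
    intro i
    have hne : (∑ j, Real.exp (net α (z + (0:ℝ) • v).1 (z + (0:ℝ) • v).2 (x i) j)) ≠ 0 := by
      rw [h0]; exact (hEpos i).ne'
    have hlog := (hE i).log hne
    have := ((hnet i (y i)).fun_neg).fun_add hlog
    simpa [loss, h0, hg] using this
  have hsum : HasDerivAt (fun t : ℝ => ∑ i,
      (-loss (y i) (net α (z + t • v).1 (z + t • v).2 (x i))
        + ∑ r, net α (z + t • v).1 (z + t • v).2 (x i) r))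
      (∑ i, (-(-(D i (y i)) + (∑ j, Real.exp (g i j) * D i j) / (∑ j, Real.exp (g i j)))
        + ∑ r, D i r)) 0 :=
    HasDerivAt.fun_sum fun i _ => ((hloss i).fun_neg).fun_add (HasDerivAt.fun_sum fun r _ => hnet i r)
  have hH : HasDerivAt (fun t : ℝ => Phi α x y ε (z + t • v))
      ((1 / (n : ℝ)) * ∑ i,
        (-(-(D i (y i)) + (∑ j, Real.exp (g i j) * D i j) / (∑ j, Real.exp (g i j)))
          + ∑ r, D i r) + ε * c) 0 := by
    unfold Phi
    exact (hsum.const_mul _).add (hlin.const_mul ε)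
  have hline : HasDerivAt (fun t : ℝ => z + t • v) v 0 := by
    simpa using ((hasDerivAt_id (0:ℝ)).smul_const v).const_add z
  have hcomp : HasDerivAt (fun t : ℝ => Phi α x y ε (z + t • v))
      (fderiv ℝ (Phi α x y ε) z v) 0 := by
    have hd : HasFDerivAt (Phi α x y ε) (fderiv ℝ (Phi α x y ε) z) (z + (0:ℝ) • v) := by
      rw [h0]; exact (phi_diffAt α hα x y ε z).hasFDerivAt
    have := hd.comp_hasDerivAt 0 hline
    simpa [Function.comp_def] using this
  have heq := hcomp.unique hH
  rw [heq]
  congr 1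
  congr 1
  refine Finset.sum_congr rfl fun i _ => ?_
  have hterm : ∀ r : Fin K, ((if y i = r then 1 else 0) -
      Real.exp (net α z.1 z.2 (x i) r) / (∑ j, Real.exp (net α z.1 z.2 (x i) j)) + 1) * D i r
      = (if y i = r then D i r else 0)
        - Real.exp (g i r) * D i r / (∑ j, Real.exp (g i j)) + D i r := by
    intro r
    by_cases hr : y i = r <;> simp [hr, hg] <;> ring
  rw [Finset.sum_congr rfl fun r _ => hterm r]
  simp only [Finset.sum_add_distrib, Finset.sum_sub_distrib, Finset.sum_ite_eq,
    Finset.mem_univ, if_true, ← Finset.sum_div]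
  ring

end Key

/-- The gradient of the one-hidden-layer objective is given by the explicit
formulas and is strictly positive everywhere on `S₊`. -/
theorem statement7 {K n1 d n : ℕ}
    (x : Fin n → Fin d → ℝ) (y : Fin n → Fin K) (hx : ∀ i m, 0 ≤ x i m)
    (pw pu : ℝ) (hpw : 1 < pw) (hpu : 1 < pu)
    (ρw ρu : ℝ) (hρw : 0 < ρw) (hρu : 0 < ρu)
    (ε : ℝ) (hε : 0 < ε)
    (α : Fin n1 → ℝ) (hα : ∀ l, 1 ≤ α l) :
    ∀ z ∈ Splus K n1 d pw pu ρw ρu,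
      (∀ (a : Fin K) (b : Fin n1),
        gradW (Phi α x y ε) z a b =
          (1 / (n : ℝ)) * (∑ i, ((if y i = a then 1 else 0) -
              Real.exp (net α z.1 z.2 (x i) a) / (∑ j, Real.exp (net α z.1 z.2 (x i) j)) + 1) *
            (∑ m, z.2 b m * x i m) ^ α b) + ε ∧
        0 < gradW (Phi α x y ε) z a b) ∧
      (∀ (a : Fin n1) (b : Fin d),
        gradU (Phi α x y ε) z a b =
          (1 / (n : ℝ)) * (∑ i, ∑ r, ((if y i = r then 1 else 0) -
              Real.exp (net α z.1 z.2 (x i) r) / (∑ j, Real.exp (net α z.1 z.2 (x i) j)) + 1) *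
            (z.1 r a * α a * (∑ m, z.2 a m * x i m) ^ (α a - 1) * x i b)) + ε ∧
        0 < gradU (Phi α x y ε) z a b) := by
  intro z hz
  obtain ⟨hw, hu, -, -⟩ := hz
  have hEpos : ∀ i : Fin n, 0 < ∑ j, Real.exp (net α z.1 z.2 (x i) j) := by
    intro i
    have : Nonempty (Fin K) := ⟨y i⟩
    exact Finset.sum_pos (fun j _ => Real.exp_pos _) Finset.univ_nonempty
  have hcoeff : ∀ (i : Fin n) (r : Fin K),
      0 ≤ (if y i = r then (1:ℝ) else 0) -
        Real.exp (net α z.1 z.2 (x i) r) / (∑ j, Real.exp (net α z.1 z.2 (x i) j)) + 1 := by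
    intro i r
    have hle : Real.exp (net α z.1 z.2 (x i) r) ≤ ∑ j, Real.exp (net α z.1 z.2 (x i) j) :=
      Finset.single_le_sum (fun j _ => (Real.exp_pos _).le) (Finset.mem_univ r)
    have hq : Real.exp (net α z.1 z.2 (x i) r) / (∑ j, Real.exp (net α z.1 z.2 (x i) j)) ≤ 1 :=
      div_le_one_of_le₀ hle (hEpos i).le
    split_ifs <;> linarith
  have hSnn : ∀ (i : Fin n) (l : Fin n1), 0 ≤ ∑ m, z.2 l m * x i m := fun i l =>
    Finset.sum_nonneg fun m _ => mul_nonneg (hu l m) (hx i m)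
  constructor
  · intro a b
    have hform : gradW (Phi α x y ε) z a b =
        (1 / (n : ℝ)) * (∑ i, ((if y i = a then 1 else 0) -
            Real.exp (net α z.1 z.2 (x i) a) / (∑ j, Real.exp (net α z.1 z.2 (x i) j)) + 1) *
          (∑ m, z.2 b m * x i m) ^ α b) + ε := by
      have hk := key α hα x y ε z (eW a b)
        (fun i r => if r = a then (∑ m, z.2 b m * x i m) ^ α b else 0) 1
        (fun i r => netW_hasDeriv α (x i) z a b r) (linW_hasDeriv z a b)
      unfold gradW
      rw [hk, mul_one]
      beta_reduce
      congr 1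
      congr 1
      refine Finset.sum_congr rfl fun i _ => ?_
      rw [Finset.sum_eq_single a]
      · simp
      · intro r _ hr; simp [hr]
      · simp
    refine ⟨hform, ?_⟩
    rw [hform]
    have hnn : 0 ≤ (1 / (n : ℝ)) * (∑ i, ((if y i = a then 1 else 0) -
        Real.exp (net α z.1 z.2 (x i) a) / (∑ j, Real.exp (net α z.1 z.2 (x i) j)) + 1) *
      (∑ m, z.2 b m * x i m) ^ α b) := by
      refine mul_nonneg (by positivity) (Finset.sum_nonneg fun i _ => ?_)
      exact mul_nonneg (hcoeff i a) (Real.rpow_nonneg (hSnn i b) _)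
    linarith
  · intro a b
    have hform : gradU (Phi α x y ε) z a b =
        (1 / (n : ℝ)) * (∑ i, ∑ r, ((if y i = r then 1 else 0) -
            Real.exp (net α z.1 z.2 (x i) r) / (∑ j, Real.exp (net α z.1 z.2 (x i) j)) + 1) *
          (z.1 r a * α a * (∑ m, z.2 a m * x i m) ^ (α a - 1) * x i b)) + ε := by
      have hk := key α hα x y ε z (eU a b)
        (fun i r => z.1 r a * (α a * (∑ m, z.2 a m * x i m) ^ (α a - 1) * x i b)) 1
        (fun i r => netU_hasDeriv α hα (x i) z a b r) (linU_hasDeriv z a b)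
      unfold gradU
      rw [hk, mul_one]
      beta_reduce
      congr 1
      congr 1
      refine Finset.sum_congr rfl fun i _ => Finset.sum_congr rfl fun r _ => ?_
      ring
    refine ⟨hform, ?_⟩
    rw [hform]
    have hnn : 0 ≤ (1 / (n : ℝ)) * (∑ i, ∑ r, ((if y i = r then 1 else 0) -
        Real.exp (net α z.1 z.2 (x i) r) / (∑ j, Real.exp (net α z.1 z.2 (x i) j)) + 1) *
      (z.1 r a * α a * (∑ m, z.2 a m * x i m) ^ (α a - 1) * x i b)) := by
      refine mul_nonneg (by positivity)
        (Finset.sum_nonneg fun i _ => Finset.sum_nonneg fun r _ => ?_)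
      refine mul_nonneg (hcoeff i r) ?_
      have hαa : (0:ℝ) ≤ α a := le_trans zero_le_one (hα a)
      exact mul_nonneg (mul_nonneg (mul_nonneg (hw r a) hαa)
        (Real.rpow_nonneg (hSnn i a) _)) (hx i b)
    linarith
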